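/- arXiv:2303.15873 — 6 statements merged into one kernel-verified Lean document; each statement's English description precedes it below -/
import Mathlib

section
/- Let k be a natural number and let G be a finite simple graph with n vertices, where n > 2k^2 - 2. Then there exists a subset S of the vertices of G such that every vertex of G ⊕ S has degree at most n - 1 - k. -/
/-- Subgraph complementation: `scompl G S` complements the subgraph of `G` induced by `S`. -/
def scompl {V : Type*} (G : SimpleGraph V) (S : Set V) : SimpleGraph V where
  Adj x y := x ≠ y ∧ ((x ∈ S ∧ y ∈ S ∧ ¬ G.Adj x y) ∨ (¬(x ∈ S ∧ y ∈ S) ∧ G.Adj x y))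
  symm := ⟨by
    rintro x y ⟨hxy, h⟩
    refine ⟨hxy.symm, ?_⟩
    rcases h with ⟨hx, hy, h⟩ | ⟨h, hadj⟩
    · exact Or.inl ⟨hy, hx, fun h' => h (G.adj_symm h')⟩
    · exact Or.inr ⟨fun hc => h ⟨hc.2, hc.1⟩, G.adj_symm hadj⟩⟩
  loopless := ⟨fun x h => h.1 rfl⟩

/-- Degree of a vertex in a finite simple graph. -/
noncomputable def deg {V : Type*} [Fintype V] (G : SimpleGraph V) (v : V) : ℕ :=
  (G.neighborSet v).ncard

/-- `a, b, c, d` form an induced diamond with `a`, `b` its degree-2 vertices. -/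
def IsDiamond {V : Type*} (G : SimpleGraph V) (a b c d : V) : Prop :=
  a ≠ b ∧ a ≠ c ∧ a ≠ d ∧ b ≠ c ∧ b ≠ d ∧ c ≠ d ∧
  G.Adj a c ∧ G.Adj a d ∧ G.Adj b c ∧ G.Adj b d ∧ G.Adj c d ∧ ¬ G.Adj a b

def DiamondFree {V : Type*} (G : SimpleGraph V) : Prop :=
  ∀ a b c d : V, ¬ IsDiamond G a b c d

/-- `r` together with the `t` distinct leaves `f 0, …, f (t-1)` forms an induced `K_{1,t}`
with center `r`. -/
def IsStar {V : Type*} (G : SimpleGraph V) (t : ℕ) (r : V) (f : Fin t → V) : Prop :=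
  Function.Injective f ∧ (∀ i, G.Adj r (f i)) ∧ ∀ i j, i ≠ j → ¬ G.Adj (f i) (f j)

def StarFree {V : Type*} (G : SimpleGraph V) (t : ℕ) : Prop :=
  ∀ (r : V) (f : Fin t → V), ¬ IsStar G t r f

set_option linter.unusedSectionVars false

namespace S5
open Set

variable {V : Type*} [Fintype V]

noncomputable def nn (G : SimpleGraph V) (v : V) : ℕ := (Gᶜ.neighborSet v).ncard
noncomputable def nns (G : SimpleGraph V) (S : Set V) (v : V) : ℕ := (Gᶜ.neighborSet v ∩ S).ncard
noncomputable def nnF (G : SimpleGraph V) (S : Set V) (v : V) : ℕ := ((scompl G S)ᶜ.neighborSet v).ncard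

lemma deg_add (G : SimpleGraph V) (v : V) :
    deg G v + nn G v = Fintype.card V - 1 := by
  have hu : G.neighborSet v ∪ Gᶜ.neighborSet v = ({v}ᶜ : Set V) := by
    ext u
    simp only [SimpleGraph.mem_neighborSet, SimpleGraph.compl_adj, Set.mem_union,
      Set.mem_compl_iff, Set.mem_singleton_iff]
    constructor
    · rintro (h | ⟨h, _⟩)
      · exact fun e => G.loopless.irrefl v (e ▸ h)
      · exact fun e => h e.symm
    · intro h
      by_cases ha : G.Adj v u
      · exact Or.inl ha
      · exact Or.inr ⟨fun e => h e.symm, ha⟩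
  have hd : Disjoint (G.neighborSet v) (Gᶜ.neighborSet v) := by
    rw [Set.disjoint_left]
    intro u hu1 hu2
    exact hu2.2 hu1
  have h1 : (({v}ᶜ : Set V)).ncard = Fintype.card V - 1 := by
    have := Set.ncard_add_ncard_compl ({v} : Set V)
    rw [Set.ncard_singleton, Nat.card_eq_fintype_card] at this
    omega
  have := Set.ncard_union_eq hd (toFinite _) (toFinite _)
  rw [hu, h1] at this
  unfold deg nn
  omega

lemma nnF_of_not_mem (G : SimpleGraph V) (S : Set V) (v : V) (hv : v ∉ S) :
    nnF G S v = nn G v := by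
  unfold nnF nn
  congr 1
  ext u
  simp only [SimpleGraph.mem_neighborSet, SimpleGraph.compl_adj, scompl]
  constructor
  · rintro ⟨hne, h⟩
    refine ⟨hne, fun ha => h ⟨hne, ?_⟩⟩
    exact Or.inr ⟨fun hc => hv hc.1, ha⟩
  · rintro ⟨hne, h⟩
    refine ⟨hne, fun hadj => ?_⟩
    rcases hadj.2 with ⟨hx, _, _⟩ | ⟨_, ha⟩
    · exact hv hx
    · exact h ha

lemma key_of_mem (G : SimpleGraph V) (S : Set V) (v : V) (hv : v ∈ S) :
    nnF G S v + 2 * nns G S v + 1 = S.ncard + nn G v := by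
  classical
  set A : Set V := {u | u ∈ S ∧ u ≠ v ∧ G.Adj v u} with hA
  set Bs : Set V := {u | u ∉ S ∧ Gᶜ.Adj v u} with hB
  set Cs : Set V := Gᶜ.neighborSet v ∩ S with hC
  have h1 : (scompl G S)ᶜ.neighborSet v = A ∪ Bs := by
    ext u
    simp only [SimpleGraph.mem_neighborSet, SimpleGraph.compl_adj, scompl, hA, hB,
      Set.mem_union, Set.mem_setOf_eq]
    constructor
    · rintro ⟨hne, h⟩
      by_cases hu : u ∈ S
      · refine Or.inl ⟨hu, fun e => hne e.symm, ?_⟩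
        by_contra hadj
        exact h ⟨hne, Or.inl ⟨hv, hu, hadj⟩⟩
      · refine Or.inr ⟨hu, hne, fun hadj => ?_⟩
        exact h ⟨hne, Or.inr ⟨fun hc => hu hc.2, hadj⟩⟩
    · rintro (⟨hu, hne, hadj⟩ | ⟨hu, hne, hnadj⟩)
      · refine ⟨fun e => hne e.symm, fun h => ?_⟩
        rcases h.2 with ⟨_, _, hn⟩ | ⟨hn, _⟩
        · exact hn hadj
        · exact hn ⟨hv, hu⟩
      · exact ⟨hne, fun h => by
          rcases h.2 with ⟨_, hu2, _⟩ | ⟨_, ha⟩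
          · exact hu hu2
          · exact hnadj ha⟩
  have hdAB : Disjoint A Bs := by
    rw [Set.disjoint_left]; rintro u ⟨hu, -⟩ ⟨hu2, -⟩; exact hu2 hu
  have h2 : S \ {v} = A ∪ Cs := by
    ext u
    simp only [hA, hC, Set.mem_diff, Set.mem_union, Set.mem_setOf_eq, Set.mem_singleton_iff,
      Set.mem_inter_iff, SimpleGraph.mem_neighborSet, SimpleGraph.compl_adj]
    constructor
    · rintro ⟨hu, hne⟩
      by_cases hadj : G.Adj v u
      · exact Or.inl ⟨hu, hne, hadj⟩
      · exact Or.inr ⟨⟨fun e => hne e.symm, hadj⟩, hu⟩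
    · rintro (⟨hu, hne, _⟩ | ⟨⟨hne, _⟩, hu⟩)
      · exact ⟨hu, hne⟩
      · exact ⟨hu, fun e => hne e.symm⟩
  have hdAC : Disjoint A Cs := by
    rw [Set.disjoint_left]
    rintro u ⟨-, -, hadj⟩ ⟨hc, -⟩
    exact hc.2 hadj
  have h3 : Gᶜ.neighborSet v = Cs ∪ Bs := by
    ext u
    simp only [hC, hB, Set.mem_union, Set.mem_inter_iff, SimpleGraph.mem_neighborSet,
      Set.mem_setOf_eq]
    by_cases hu : u ∈ S <;> tauto
  have hdCB : Disjoint Cs Bs := by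
    rw [Set.disjoint_left]; rintro u ⟨-, hu⟩ ⟨hu2, -⟩; exact hu2 hu
  have e1 : nnF G S v = A.ncard + Bs.ncard := by
    unfold nnF; rw [h1, Set.ncard_union_eq hdAB (toFinite _) (toFinite _)]
  have e2 : (S \ {v}).ncard = A.ncard + Cs.ncard := by
    rw [h2, Set.ncard_union_eq hdAC (toFinite _) (toFinite _)]
  have e2' : (S \ {v}).ncard + 1 = S.ncard := Set.ncard_diff_singleton_add_one hv (toFinite _)
  have e3 : nn G v = Cs.ncard + Bs.ncard := by
    unfold nn; rw [h3, Set.ncard_union_eq hdCB (toFinite _) (toFinite _)]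
  have e4 : nns G S v = Cs.ncard := rfl
  omega

lemma nns_le_nn (G : SimpleGraph V) (S : Set V) (v : V) : nns G S v ≤ nn G v :=
  Set.ncard_le_ncard Set.inter_subset_left (toFinite _)

lemma nns_lt_card (G : SimpleGraph V) (S : Set V) (v : V) (hv : v ∈ S) :
    nns G S v + 1 ≤ S.ncard := by
  have hsub : Gᶜ.neighborSet v ∩ S ⊆ S \ {v} := by
    rintro u ⟨hu1, hu2⟩
    exact ⟨hu2, fun e => (Gᶜ.loopless.irrefl v) (by rwa [Set.mem_singleton_iff.1 e] at hu1)⟩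
  have := Set.ncard_le_ncard hsub (toFinite _)
  have e2' : (S \ {v}).ncard + 1 = S.ncard := Set.ncard_diff_singleton_add_one hv (toFinite _)
  unfold nns
  omega

lemma good (G : SimpleGraph V) (S : Set V) (k : ℕ)
    (hout : ∀ v ∉ S, k ≤ nn G v)
    (hin : ∀ v ∈ S, k + 2 * nns G S v + 1 ≤ S.ncard + nn G v) :
    ∀ v : V, deg (scompl G S) v ≤ Fintype.card V - 1 - k := by
  intro v
  have hdeg := deg_add (scompl G S) v
  have hk : k ≤ nnF G S v := by
    by_cases hv : v ∈ S
    · have h1 := key_of_mem G S v hv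
      have h2 := hin v hv
      omega
    · rw [nnF_of_not_mem G S v hv]
      exact hout v hv
  have he : nn (scompl G S) v = nnF G S v := rfl
  omega

/-! ### Counting sets -/

def LowS (G : SimpleGraph V) (j : ℕ) : Set V := {v | nn G v ≤ j}
def LHS (G : SimpleGraph V) (k j : ℕ) : Set V := {v | nn G v ≤ j ∨ j + 2*k ≤ nn G v}
def MidS (G : SimpleGraph V) (k j : ℕ) : Set V := {v | j+1 ≤ nn G v ∧ nn G v + 1 ≤ j + 2*k}

lemma psi_split (G : SimpleGraph V) (k j₁ j₂ : ℕ) (hk : 1 ≤ k) (h : j₂ + 1 = j₁ + 2*k) :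
    (LowS G j₂).ncard = (LowS G j₁).ncard + (MidS G k j₁).ncard := by
  have hu : LowS G j₂ = LowS G j₁ ∪ MidS G k j₁ := by
    ext v
    simp only [LowS, MidS, Set.mem_union, Set.mem_setOf_eq]
    omega
  have hd : Disjoint (LowS G j₁) (MidS G k j₁) := by
    rw [Set.disjoint_left]
    intro v h1 h2
    simp only [LowS, MidS, Set.mem_setOf_eq] at h1 h2
    omega
  rw [hu, Set.ncard_union_eq hd (toFinite _) (toFinite _)]

lemma total_split (G : SimpleGraph V) (k j : ℕ) :
    Fintype.card V = (LHS G k j).ncard + (MidS G k j).ncard := by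
  have hu : (Set.univ : Set V) = LHS G k j ∪ MidS G k j := by
    ext v
    simp only [LHS, MidS, Set.mem_union, Set.mem_setOf_eq, Set.mem_univ, true_iff]
    omega
  have hd : Disjoint (LHS G k j) (MidS G k j) := by
    rw [Set.disjoint_left]
    intro v h1 h2
    simp only [LHS, MidS, Set.mem_setOf_eq] at h1 h2
    omega
  have := Set.ncard_union_eq hd (toFinite (LHS G k j)) (toFinite (MidS G k j))
  rw [← hu, Set.ncard_univ, Nat.card_eq_fintype_card] at this
  exact this

lemma ncard_le_card (s : Set V) : s.ncard ≤ Fintype.card V := by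
  have := Set.ncard_le_ncard (Set.subset_univ s) (toFinite _)
  rwa [Set.ncard_univ, Nat.card_eq_fintype_card] at this

/-! ### The Low/High construction -/

lemma build (G : SimpleGraph V) (k j : ℕ) (hk : 1 ≤ k) (hj : k - 1 ≤ j)
    (hb : (LowS G (k-1)).ncard ≤ k + 1 + j)
    (hLH : k + 1 + j ≤ (LHS G k j).ncard) :
    ∃ S : Set V, ∀ v : V, deg (scompl G S) v ≤ Fintype.card V - 1 - k := by
  classical
  set B := LowS G (k-1) with hBdef
  have hBsub : B ⊆ LHS G k j := by
    intro v hv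
    simp only [hBdef, LowS, Set.mem_setOf_eq] at hv
    exact Or.inl (by omega)
  have hdiff : (LHS G k j \ B).ncard = (LHS G k j).ncard - B.ncard :=
    Set.ncard_diff hBsub (toFinite _)
  have hTex : k + 1 + j - B.ncard ≤ (LHS G k j \ B).ncard := by omega
  obtain ⟨T, hTsub, hTcard⟩ := Set.exists_subset_card_eq hTex
  set S := B ∪ T with hSdef
  have hdisj : Disjoint B T := by
    rw [Set.disjoint_left]
    intro v hv hvT
    exact (hTsub hvT).2 hv
  have hScard : S.ncard = k + 1 + j := by
    rw [hSdef, Set.ncard_union_eq hdisj (toFinite _) (toFinite _), hTcard]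
    omega
  have hSLH : S ⊆ LHS G k j := by
    rintro v (hv | hv)
    · exact hBsub hv
    · exact (hTsub hv).1
  refine ⟨S, good G S k ?_ ?_⟩
  · intro v hv
    have : v ∉ B := fun h => hv (Or.inl h)
    simp only [hBdef, LowS, Set.mem_setOf_eq] at this
    omega
  · intro v hv
    have hlh := hSLH hv
    have h1 := nns_le_nn G S v
    have h2 := nns_lt_card G S v hv
    simp only [LHS, Set.mem_setOf_eq] at hlh
    rcases hlh with hlow | hhigh <;> omega

/-! ### k = 2 residual cases -/

lemma nns_le_of_subset (G : SimpleGraph V) (S : Set V) (v : V) (W : Set V)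
    (h : Gᶜ.neighborSet v ∩ S ⊆ W) : nns G S v ≤ W.ncard :=
  Set.ncard_le_ncard h (toFinite _)

lemma resid2 (G : SimpleGraph V) (hn : 7 ≤ Fintype.card V)
    (hB : (LowS G 1).ncard = 2) :
    ∃ S : Set V, ∀ v : V, deg (scompl G S) v ≤ Fintype.card V - 1 - 2 := by
  classical
  obtain ⟨u₁, u₂, hu12, hBeq⟩ := Set.ncard_eq_two.1 hB
  have hu1B : nn G u₁ ≤ 1 := by
    have : u₁ ∈ LowS G 1 := hBeq ▸ (by simp)
    exact this
  have hu2B : nn G u₂ ≤ 1 := by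
    have : u₂ ∈ LowS G 1 := hBeq ▸ (by simp)
    exact this
  set X := (Gᶜ.neighborSet u₁ ∪ Gᶜ.neighborSet u₂) ∪ {u₁, u₂} with hXdef
  have hXcard : X.ncard ≤ 4 := by
    calc X.ncard ≤ (Gᶜ.neighborSet u₁ ∪ Gᶜ.neighborSet u₂).ncard + ({u₁, u₂} : Set V).ncard :=
          Set.ncard_union_le _ _
    _ ≤ (Gᶜ.neighborSet u₁).ncard + (Gᶜ.neighborSet u₂).ncard + ({u₁, u₂} : Set V).ncard :=
          by have := Set.ncard_union_le (Gᶜ.neighborSet u₁) (Gᶜ.neighborSet u₂); omega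
    _ ≤ 1 + 1 + 2 := by
          have h2 : ({u₁, u₂} : Set V).ncard = 2 := Set.ncard_pair hu12
          have := hu1B; have := hu2B
          unfold nn at *
          omega
    _ = 4 := rfl
  have hCcard : 2 ≤ (Xᶜ).ncard := by
    have := Set.ncard_add_ncard_compl X
    rw [Nat.card_eq_fintype_card] at this
    omega
  obtain ⟨T, hTsub, hTcard⟩ := Set.exists_subset_card_eq hCcard
  obtain ⟨t₁, t₂, ht12, hTeq⟩ := Set.ncard_eq_two.1 hTcard
  have ht1C : t₁ ∈ Xᶜ := hTsub (hTeq ▸ (by simp))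
  have ht2C : t₂ ∈ Xᶜ := hTsub (hTeq ▸ (by simp))
  have hmemX : ∀ t ∈ (Xᶜ : Set V), t ≠ u₁ ∧ t ≠ u₂ ∧ ¬ Gᶜ.Adj u₁ t ∧ ¬ Gᶜ.Adj u₂ t := by
    intro t ht
    simp only [hXdef, Set.mem_compl_iff, Set.mem_union, Set.mem_insert_iff,
      Set.mem_singleton_iff, SimpleGraph.mem_neighborSet, not_or] at ht
    exact ⟨ht.2.1, ht.2.2, ht.1.1, ht.1.2⟩
  obtain ⟨ht1u1, ht1u2, ht1a1, ht1a2⟩ := hmemX t₁ ht1C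
  obtain ⟨ht2u1, ht2u2, ht2a1, ht2a2⟩ := hmemX t₂ ht2C
  have hnotB : ∀ v : V, v ≠ u₁ → v ≠ u₂ → 2 ≤ nn G v := by
    intro v h1 h2
    have : v ∉ LowS G 1 := by rw [hBeq]; simp [h1, h2]
    simp only [LowS, Set.mem_setOf_eq] at this
    omega
  set S : Set V := {u₁, u₂, t₁, t₂} with hSdef
  have hScard : S.ncard = 4 := by
    rw [hSdef]
    rw [Set.ncard_insert_of_notMem (by simp [hu12, ht1u1.symm, ht2u1.symm]) (toFinite _),
        Set.ncard_insert_of_notMem (by simp [ht1u2.symm, ht2u2.symm]) (toFinite _),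
        Set.ncard_pair ht12]
  have H3 : nns G S t₁ ≤ 1 := by
    refine nns_le_of_subset G S t₁ {t₂} ?_ |>.trans (by simp)
    rintro w ⟨hw1, hw2⟩
    simp only [SimpleGraph.mem_neighborSet] at hw1
    simp only [hSdef, Set.mem_insert_iff, Set.mem_singleton_iff] at hw2
    rcases hw2 with rfl | rfl | rfl | rfl
    · exact absurd hw1.symm ht1a1
    · exact absurd hw1.symm ht1a2
    · exact absurd hw1 (Gᶜ.loopless.irrefl _)
    · simp
  have H4 : nns G S t₂ ≤ 1 := by
    refine nns_le_of_subset G S t₂ {t₁} ?_ |>.trans (by simp)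
    rintro w ⟨hw1, hw2⟩
    simp only [SimpleGraph.mem_neighborSet] at hw1
    simp only [hSdef, Set.mem_insert_iff, Set.mem_singleton_iff] at hw2
    rcases hw2 with rfl | rfl | rfl | rfl
    · exact absurd hw1.symm ht2a1
    · exact absurd hw1.symm ht2a2
    · simp
    · exact absurd hw1 (Gᶜ.loopless.irrefl _)
  have hn1 : 2 ≤ nn G t₁ := hnotB t₁ ht1u1 ht1u2
  have hn2 : 2 ≤ nn G t₂ := hnotB t₂ ht2u1 ht2u2
  have K1 : 2 + 2 * nns G S u₁ + 1 ≤ 4 + nn G u₁ := by have := nns_le_nn G S u₁; omega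
  have K2 : 2 + 2 * nns G S u₂ + 1 ≤ 4 + nn G u₂ := by have := nns_le_nn G S u₂; omega
  have K3 : 2 + 2 * nns G S t₁ + 1 ≤ 4 + nn G t₁ := by omega
  have K4 : 2 + 2 * nns G S t₂ + 1 ≤ 4 + nn G t₂ := by omega
  refine ⟨S, good G S 2 ?_ ?_⟩
  · intro v hv
    simp only [hSdef, Set.mem_insert_iff, Set.mem_singleton_iff, not_or] at hv
    exact hnotB v hv.1 hv.2.1
  · intro v hv
    rw [hScard]
    simp only [hSdef, Set.mem_insert_iff, Set.mem_singleton_iff] at hv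
    rcases hv with rfl | rfl | rfl | rfl
    · exact K1
    · exact K2
    · exact K3
    · exact K4

lemma nns_le_one (G : SimpleGraph V) (S : Set V) (v x : V)
    (h : ∀ w ∈ S, Gᶜ.Adj v w → w = x) : nns G S v ≤ 1 := by
  refine (nns_le_of_subset G S v {x} ?_).trans (by simp)
  rintro w ⟨hw1, hw2⟩
  exact h w hw2 hw1

lemma nns_le_two (G : SimpleGraph V) (S : Set V) (v x y : V)
    (h : ∀ w ∈ S, Gᶜ.Adj v w → w = x ∨ w = y) : nns G S v ≤ 2 := by
  refine (nns_le_of_subset G S v {x, y} ?_).trans ?_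
  · rintro w ⟨hw1, hw2⟩
    rcases h w hw2 hw1 with rfl | rfl <;> simp
  · exact (Set.ncard_insert_le _ _).trans (by simp)

lemma ncard4 (a b c d : V) (hab : a ≠ b) (hac : a ≠ c) (had : a ≠ d)
    (hbc : b ≠ c) (hbd : b ≠ d) (hcd : c ≠ d) :
    ({a, b, c, d} : Set V).ncard = 4 := by
  rw [Set.ncard_insert_of_notMem (by simp [hab, hac, had]) (toFinite _),
      Set.ncard_insert_of_notMem (by simp [hbc, hbd]) (toFinite _),
      Set.ncard_pair hcd]

lemma resid1 (G : SimpleGraph V) (hn : 7 ≤ Fintype.card V)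
    (hB : (LowS G 1).ncard = 1)
    (hMid : Fintype.card V ≤ (MidS G 2 3).ncard + 5) :
    ∃ S : Set V, ∀ v : V, deg (scompl G S) v ≤ Fintype.card V - 1 - 2 := by
  classical
  obtain ⟨u, hBeq⟩ := Set.ncard_eq_one.1 hB
  have hu1 : nn G u ≤ 1 := by
    have : u ∈ LowS G 1 := hBeq ▸ (by simp)
    exact this
  have hnotB : ∀ v : V, v ≠ u → 2 ≤ nn G v := by
    intro v h1
    have : v ∉ LowS G 1 := by rw [hBeq]; simp [h1]
    simp only [LowS, Set.mem_setOf_eq] at this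
    omega
  set X := Gᶜ.neighborSet u ∪ {u} with hXdef
  have hXcard : X.ncard ≤ 2 := by
    rw [hXdef]
    have h1 := Set.ncard_union_le (Gᶜ.neighborSet u) ({u} : Set V)
    have h2 : ({u} : Set V).ncard = 1 := Set.ncard_singleton u
    have h3 : (Gᶜ.neighborSet u).ncard = nn G u := rfl
    omega
  have hmemC : ∀ t ∈ (Xᶜ : Set V), t ≠ u ∧ ¬ Gᶜ.Adj u t := by
    intro t ht
    simp only [hXdef, Set.mem_compl_iff, Set.mem_union, Set.mem_singleton_iff,
      SimpleGraph.mem_neighborSet, not_or] at ht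
    exact ⟨ht.2, ht.1⟩
  have hCadj : ∀ t ∈ (Xᶜ : Set V), ¬ Gᶜ.Adj t u := fun t ht h => (hmemC t ht).2 h.symm
  set P : Set V := {v | v ∈ (Xᶜ : Set V) ∧ 3 ≤ nn G v} with hPdef
  have hPsub : P ⊆ Xᶜ := fun v hv => hv.1
  -- |P| ≥ 1
  have hPcard : 1 ≤ P.ncard := by
    have hsub : MidS G 2 3 \ Gᶜ.neighborSet u ⊆ P := by
      rintro v ⟨hv1, hv2⟩
      obtain ⟨hv3, hv4⟩ := hv1
      have hvu : v ≠ u := by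
        intro e; rw [e] at hv3; omega
      refine ⟨?_, by omega⟩
      simp only [hXdef, Set.mem_compl_iff, Set.mem_union, Set.mem_singleton_iff, not_or]
      exact ⟨hv2, hvu⟩
    have h1 : (MidS G 2 3).ncard ≤ (MidS G 2 3 \ Gᶜ.neighborSet u).ncard + (Gᶜ.neighborSet u).ncard := by
      have hs : MidS G 2 3 ⊆ (MidS G 2 3 \ Gᶜ.neighborSet u) ∪ Gᶜ.neighborSet u := by
        intro v hv
        by_cases h : v ∈ Gᶜ.neighborSet u
        · exact Or.inr h
        · exact Or.inl ⟨hv, h⟩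
      exact (Set.ncard_le_ncard hs (toFinite _)).trans (Set.ncard_union_le _ _)
    have h2 := Set.ncard_le_ncard hsub (toFinite _)
    have h3 : (Gᶜ.neighborSet u).ncard = nn G u := rfl
    omega
  have hCcard : Fintype.card V ≤ (Xᶜ).ncard + 2 := by
    have := Set.ncard_add_ncard_compl X
    rw [Nat.card_eq_fintype_card] at this
    omega
  -- case split on |P|
  by_cases h3 : 3 ≤ P.ncard
  · -- three high vertices
    obtain ⟨T, hTsub, hTcard⟩ := Set.exists_subset_card_eq h3
    obtain ⟨p, q, r, hpq, hpr, hqr, hTeq⟩ := Set.ncard_eq_three.1 hTcard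
    have hpP : p ∈ P := hTsub (hTeq ▸ (by simp))
    have hqP : q ∈ P := hTsub (hTeq ▸ (by simp))
    have hrP : r ∈ P := hTsub (hTeq ▸ (by simp))
    set S : Set V := {u, p, q, r} with hSdef
    have hScard : S.ncard = 4 :=
      ncard4 u p q r (fun e => (hmemC p hpP.1).1 e.symm) (fun e => (hmemC q hqP.1).1 e.symm)
        (fun e => (hmemC r hrP.1).1 e.symm) hpq hpr hqr
    have Ku : 2 + 2 * nns G S u + 1 ≤ 4 + nn G u := by
      have := nns_le_nn G S u; omega
    have Kp : 2 + 2 * nns G S p + 1 ≤ 4 + nn G p := by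
      have h := nns_le_two G S p q r (by
        rintro w hw hadj
        simp only [hSdef, Set.mem_insert_iff, Set.mem_singleton_iff] at hw
        rcases hw with rfl | rfl | rfl | rfl
        · exact absurd hadj (hCadj p hpP.1)
        · exact absurd hadj (Gᶜ.loopless.irrefl _)
        · exact Or.inl rfl
        · exact Or.inr rfl)
      have := hpP.2; omega
    have Kq : 2 + 2 * nns G S q + 1 ≤ 4 + nn G q := by
      have h := nns_le_two G S q p r (by
        rintro w hw hadj
        simp only [hSdef, Set.mem_insert_iff, Set.mem_singleton_iff] at hw
        rcases hw with rfl | rfl | rfl | rfl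
        · exact absurd hadj (hCadj q hqP.1)
        · exact Or.inl rfl
        · exact absurd hadj (Gᶜ.loopless.irrefl _)
        · exact Or.inr rfl)
      have := hqP.2; omega
    have Kr : 2 + 2 * nns G S r + 1 ≤ 4 + nn G r := by
      have h := nns_le_two G S r p q (by
        rintro w hw hadj
        simp only [hSdef, Set.mem_insert_iff, Set.mem_singleton_iff] at hw
        rcases hw with rfl | rfl | rfl | rfl
        · exact absurd hadj (hCadj r hrP.1)
        · exact Or.inl rfl
        · exact Or.inr rfl
        · exact absurd hadj (Gᶜ.loopless.irrefl _))
      have := hrP.2; omega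
    refine ⟨S, good G S 2 ?_ ?_⟩
    · intro v hv
      simp only [hSdef, Set.mem_insert_iff, Set.mem_singleton_iff, not_or] at hv
      exact hnotB v hv.1
    · intro v hv
      rw [hScard]
      simp only [hSdef, Set.mem_insert_iff, Set.mem_singleton_iff] at hv
      rcases hv with rfl | rfl | rfl | rfl
      · exact Ku
      · exact Kp
      · exact Kq
      · exact Kr
  · -- |P| ≤ 2
    set Q : Set V := Xᶜ \ P with hQdef
    have hQcard : (Xᶜ).ncard = Q.ncard + P.ncard := by
      rw [hQdef]
      have := Set.ncard_diff hPsub (toFinite _)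
      have := Set.ncard_le_ncard hPsub (toFinite (Xᶜ : Set V))
      omega
    have hQnn : ∀ t ∈ Q, nn G t = 2 := by
      rintro t ⟨htC, htP⟩
      have h1 : ¬ 3 ≤ nn G t := fun h => htP ⟨htC, h⟩
      have h2 := hnotB t (hmemC t htC).1
      omega
    have hQC : Q ⊆ (Xᶜ : Set V) := fun v hv => hv.1
    by_cases h2 : P.ncard = 2
    · obtain ⟨p, q, hpq, hPeq⟩ := Set.ncard_eq_two.1 h2
      have hpP : p ∈ P := hPeq ▸ (by simp)
      have hqP : q ∈ P := hPeq ▸ (by simp)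
      have hQ2 : 2 ≤ Q.ncard := by omega
      by_cases hEx : ∃ t ∈ Q, ¬ Gᶜ.Adj t p ∨ ¬ Gᶜ.Adj t q
      · obtain ⟨t, htQ, hor⟩ := hEx
        have htC := hQC htQ
        have htp : t ≠ p := fun e => htQ.2 (e ▸ hpP)
        have htq : t ≠ q := fun e => htQ.2 (e ▸ hqP)
        set S : Set V := {u, p, q, t} with hSdef
        have hScard : S.ncard = 4 :=
          ncard4 u p q t (fun e => (hmemC p hpP.1).1 e.symm) (fun e => (hmemC q hqP.1).1 e.symm)
            (fun e => (hmemC t htC).1 e.symm) hpq htp.symm htq.symm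
        have Kt : 2 + 2 * nns G S t + 1 ≤ 4 + nn G t := by
          have hle : nns G S t ≤ 1 := by
            rcases hor with hnp | hnq
            · refine nns_le_one G S t q ?_
              rintro w hw hadj
              simp only [hSdef, Set.mem_insert_iff, Set.mem_singleton_iff] at hw
              rcases hw with rfl | rfl | rfl | rfl
              · exact absurd hadj (hCadj t htC)
              · exact absurd hadj hnp
              · rfl
              · exact absurd hadj (Gᶜ.loopless.irrefl _)
            · refine nns_le_one G S t p ?_
              rintro w hw hadj
              simp only [hSdef, Set.mem_insert_iff, Set.mem_singleton_iff] at hw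
              rcases hw with rfl | rfl | rfl | rfl
              · exact absurd hadj (hCadj t htC)
              · rfl
              · exact absurd hadj hnq
              · exact absurd hadj (Gᶜ.loopless.irrefl _)
          have := hQnn t htQ
          omega
        have Kp : 2 + 2 * nns G S p + 1 ≤ 4 + nn G p := by
          have h := nns_le_two G S p q t (by
            rintro w hw hadj
            simp only [hSdef, Set.mem_insert_iff, Set.mem_singleton_iff] at hw
            rcases hw with rfl | rfl | rfl | rfl
            · exact absurd hadj (hCadj p hpP.1)
            · exact absurd hadj (Gᶜ.loopless.irrefl _)
            · exact Or.inl rfl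
            · exact Or.inr rfl)
          have := hpP.2; omega
        have Kq : 2 + 2 * nns G S q + 1 ≤ 4 + nn G q := by
          have h := nns_le_two G S q p t (by
            rintro w hw hadj
            simp only [hSdef, Set.mem_insert_iff, Set.mem_singleton_iff] at hw
            rcases hw with rfl | rfl | rfl | rfl
            · exact absurd hadj (hCadj q hqP.1)
            · exact Or.inl rfl
            · exact absurd hadj (Gᶜ.loopless.irrefl _)
            · exact Or.inr rfl)
          have := hqP.2; omega
        have Ku : 2 + 2 * nns G S u + 1 ≤ 4 + nn G u := by
          have := nns_le_nn G S u; omega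
        refine ⟨S, good G S 2 ?_ ?_⟩
        · intro v hv
          simp only [hSdef, Set.mem_insert_iff, Set.mem_singleton_iff, not_or] at hv
          exact hnotB v hv.1
        · intro v hv
          rw [hScard]
          simp only [hSdef, Set.mem_insert_iff, Set.mem_singleton_iff] at hv
          rcases hv with rfl | rfl | rfl | rfl
          · exact Ku
          · exact Kp
          · exact Kq
          · exact Kt
      · push_neg at hEx
        obtain ⟨T, hTsub, hTcard⟩ := Set.exists_subset_card_eq hQ2
        obtain ⟨t₁, t₂, ht12, hTeq⟩ := Set.ncard_eq_two.1 hTcard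
        have ht1Q : t₁ ∈ Q := hTsub (hTeq ▸ (by simp))
        have ht2Q : t₂ ∈ Q := hTsub (hTeq ▸ (by simp))
        have ht1C := hQC ht1Q
        have ht2C := hQC ht2Q
        have ht1p : t₁ ≠ p := fun e => ht1Q.2 (e ▸ hpP)
        have ht1q : t₁ ≠ q := fun e => ht1Q.2 (e ▸ hqP)
        have ht2p : t₂ ≠ p := fun e => ht2Q.2 (e ▸ hpP)
        have ht2q : t₂ ≠ q := fun e => ht2Q.2 (e ▸ hqP)
        have hnadj : ¬ Gᶜ.Adj t₁ t₂ := by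
          intro hadj
          have hsub : ({p, q, t₂} : Set V) ⊆ Gᶜ.neighborSet t₁ := by
            rintro w hw
            simp only [Set.mem_insert_iff, Set.mem_singleton_iff] at hw
            rcases hw with rfl | rfl | rfl
            · exact (hEx t₁ ht1Q).1
            · exact (hEx t₁ ht1Q).2
            · exact hadj
          have hc : ({p, q, t₂} : Set V).ncard = 3 := by
            rw [Set.ncard_insert_of_notMem (by simp [hpq, ht2p.symm]) (toFinite _),
                Set.ncard_pair ht2q.symm]
          have := Set.ncard_le_ncard hsub (toFinite _)
          have h2 := hQnn t₁ ht1Q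
          unfold nn at h2
          omega
        set S : Set V := {u, q, t₁, t₂} with hSdef
        have hScard : S.ncard = 4 :=
          ncard4 u q t₁ t₂ (fun e => (hmemC q hqP.1).1 e.symm) (fun e => (hmemC t₁ ht1C).1 e.symm)
            (fun e => (hmemC t₂ ht2C).1 e.symm) ht1q.symm ht2q.symm ht12
        have Kt1 : 2 + 2 * nns G S t₁ + 1 ≤ 4 + nn G t₁ := by
          have hle : nns G S t₁ ≤ 1 := by
            refine nns_le_one G S t₁ q ?_
            rintro w hw hadj
            simp only [hSdef, Set.mem_insert_iff, Set.mem_singleton_iff] at hw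
            rcases hw with rfl | rfl | rfl | rfl
            · exact absurd hadj (hCadj t₁ ht1C)
            · rfl
            · exact absurd hadj (Gᶜ.loopless.irrefl _)
            · exact absurd hadj hnadj
          have := hQnn t₁ ht1Q
          omega
        have Kt2 : 2 + 2 * nns G S t₂ + 1 ≤ 4 + nn G t₂ := by
          have hle : nns G S t₂ ≤ 1 := by
            refine nns_le_one G S t₂ q ?_
            rintro w hw hadj
            simp only [hSdef, Set.mem_insert_iff, Set.mem_singleton_iff] at hw
            rcases hw with rfl | rfl | rfl | rfl
            · exact absurd hadj (hCadj t₂ ht2C)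
            · rfl
            · exact absurd hadj.symm hnadj
            · exact absurd hadj (Gᶜ.loopless.irrefl _)
          have := hQnn t₂ ht2Q
          omega
        have Kq : 2 + 2 * nns G S q + 1 ≤ 4 + nn G q := by
          have h := nns_le_two G S q t₁ t₂ (by
            rintro w hw hadj
            simp only [hSdef, Set.mem_insert_iff, Set.mem_singleton_iff] at hw
            rcases hw with rfl | rfl | rfl | rfl
            · exact absurd hadj (hCadj q hqP.1)
            · exact absurd hadj (Gᶜ.loopless.irrefl _)
            · exact Or.inl rfl
            · exact Or.inr rfl)
          have := hqP.2; omega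
        have Ku : 2 + 2 * nns G S u + 1 ≤ 4 + nn G u := by
          have := nns_le_nn G S u; omega
        refine ⟨S, good G S 2 ?_ ?_⟩
        · intro v hv
          simp only [hSdef, Set.mem_insert_iff, Set.mem_singleton_iff, not_or] at hv
          exact hnotB v hv.1
        · intro v hv
          rw [hScard]
          simp only [hSdef, Set.mem_insert_iff, Set.mem_singleton_iff] at hv
          rcases hv with rfl | rfl | rfl | rfl
          · exact Ku
          · exact Kq
          · exact Kt1
          · exact Kt2
    · -- |P| = 1
      have h1 : P.ncard = 1 := by omega
      obtain ⟨p, hPeq⟩ := Set.ncard_eq_one.1 h1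
      have hpP : p ∈ P := hPeq ▸ (by simp)
      have hQ4 : 4 ≤ Q.ncard := by omega
      have hpair : ∃ t₁ ∈ Q, ∃ t₂ ∈ Q, t₁ ≠ t₂ ∧ ¬ Gᶜ.Adj t₁ t₂ := by
        by_contra hcon
        push_neg at hcon
        have hQne : Q.Nonempty := by
          rw [← Set.ncard_pos (toFinite _)]
          omega
        obtain ⟨t₁, ht1Q⟩ := hQne
        have hsub : Q \ {t₁} ⊆ Gᶜ.neighborSet t₁ := by
          rintro w ⟨hwQ, hw1⟩
          exact hcon t₁ ht1Q w hwQ (fun e => hw1 (by simp [e.symm]))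
        have hc := Set.ncard_le_ncard hsub (toFinite _)
        have hd : (Q \ {t₁}).ncard + 1 = Q.ncard := Set.ncard_diff_singleton_add_one ht1Q (toFinite _)
        have h2 := hQnn t₁ ht1Q
        unfold nn at h2
        omega
      obtain ⟨t₁, ht1Q, t₂, ht2Q, ht12, hnadj⟩ := hpair
      have ht1C := hQC ht1Q
      have ht2C := hQC ht2Q
      have ht1p : t₁ ≠ p := fun e => ht1Q.2 (e ▸ hpP)
      have ht2p : t₂ ≠ p := fun e => ht2Q.2 (e ▸ hpP)
      set S : Set V := {u, p, t₁, t₂} with hSdef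
      have hScard : S.ncard = 4 :=
        ncard4 u p t₁ t₂ (fun e => (hmemC p hpP.1).1 e.symm) (fun e => (hmemC t₁ ht1C).1 e.symm)
          (fun e => (hmemC t₂ ht2C).1 e.symm) ht1p.symm ht2p.symm ht12
      have Kt1 : 2 + 2 * nns G S t₁ + 1 ≤ 4 + nn G t₁ := by
        have hle : nns G S t₁ ≤ 1 := by
          refine nns_le_one G S t₁ p ?_
          rintro w hw hadj
          simp only [hSdef, Set.mem_insert_iff, Set.mem_singleton_iff] at hw
          rcases hw with rfl | rfl | rfl | rfl
          · exact absurd hadj (hCadj t₁ ht1C)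
          · rfl
          · exact absurd hadj (Gᶜ.loopless.irrefl _)
          · exact absurd hadj hnadj
        have := hQnn t₁ ht1Q
        omega
      have Kt2 : 2 + 2 * nns G S t₂ + 1 ≤ 4 + nn G t₂ := by
        have hle : nns G S t₂ ≤ 1 := by
          refine nns_le_one G S t₂ p ?_
          rintro w hw hadj
          simp only [hSdef, Set.mem_insert_iff, Set.mem_singleton_iff] at hw
          rcases hw with rfl | rfl | rfl | rfl
          · exact absurd hadj (hCadj t₂ ht2C)
          · rfl
          · exact absurd hadj.symm hnadj
          · exact absurd hadj (Gᶜ.loopless.irrefl _)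
        have := hQnn t₂ ht2Q
        omega
      have Kp : 2 + 2 * nns G S p + 1 ≤ 4 + nn G p := by
        have h := nns_le_two G S p t₁ t₂ (by
          rintro w hw hadj
          simp only [hSdef, Set.mem_insert_iff, Set.mem_singleton_iff] at hw
          rcases hw with rfl | rfl | rfl | rfl
          · exact absurd hadj (hCadj p hpP.1)
          · exact absurd hadj (Gᶜ.loopless.irrefl _)
          · exact Or.inl rfl
          · exact Or.inr rfl)
        have := hpP.2; omega
      have Ku : 2 + 2 * nns G S u + 1 ≤ 4 + nn G u := by
        have := nns_le_nn G S u; omega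
      refine ⟨S, good G S 2 ?_ ?_⟩
      · intro v hv
        simp only [hSdef, Set.mem_insert_iff, Set.mem_singleton_iff, not_or] at hv
        exact hnotB v hv.1
      · intro v hv
        rw [hScard]
        simp only [hSdef, Set.mem_insert_iff, Set.mem_singleton_iff] at hv
        rcases hv with rfl | rfl | rfl | rfl
        · exact Ku
        · exact Kp
        · exact Kt1
        · exact Kt2

end S5

theorem stmt5 {V : Type*} [Fintype V] (k : ℕ) (G : SimpleGraph V)
    (hn : Fintype.card V > 2 * k ^ 2 - 2) :
    ∃ S : Set V, ∀ v : V, deg (scompl G S) v ≤ Fintype.card V - 1 - k := by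
  classical
  by_cases hk0 : k = 0
  · subst hk0
    refine ⟨∅, fun v => ?_⟩
    have := S5.deg_add (scompl G ∅) v
    omega
  have hk1 : 1 ≤ k := Nat.one_le_iff_ne_zero.2 hk0
  have hBnn : ∀ v, v ∉ S5.LowS G (k-1) → k ≤ S5.nn G v := by
    intro v hv
    simp only [S5.LowS, Set.mem_setOf_eq] at hv
    omega
  have hBmem : ∀ v ∈ S5.LowS G (k-1), S5.nn G v ≤ k - 1 := fun v hv => hv
  by_cases hb0 : (S5.LowS G (k-1)).ncard = 0
  · have hBe : S5.LowS G (k-1) = ∅ := (Set.ncard_eq_zero (Set.toFinite _)).1 hb0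
    refine ⟨∅, S5.good G ∅ k ?_ ?_⟩
    · intro v _
      exact hBnn v (by rw [hBe]; exact Set.notMem_empty v)
    · intro v hv
      exact absurd hv (Set.notMem_empty v)
  by_cases hb2k : 2*k ≤ (S5.LowS G (k-1)).ncard
  · refine ⟨S5.LowS G (k-1), S5.good G _ k (fun v hv => hBnn v hv) ?_⟩
    intro v hv
    have h1 := hBmem v hv
    have h2 := S5.nns_le_nn G (S5.LowS G (k-1)) v
    omega
  by_cases hkone : k = 1
  · subst hkone
    by_cases hn1 : Fintype.card V ≤ 1
    · refine ⟨∅, fun v => ?_⟩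
      have := S5.deg_add (scompl G ∅) v
      omega
    · have hb1 : (S5.LowS G 0).ncard = 1 := by
        have h1 : S5.LowS G (1-1) = S5.LowS G 0 := rfl
        rw [h1] at hb0 hb2k
        omega
      obtain ⟨u, hBeq⟩ := Set.ncard_eq_one.1 hb1
      have hu0 : S5.nn G u = 0 := by
        have : u ∈ S5.LowS G 0 := hBeq ▸ (by simp)
        simpa [S5.LowS] using this
      obtain ⟨w, hw⟩ := Fintype.exists_ne_of_one_lt_card (by omega) u
      have hwu : ¬ Gᶜ.Adj w u := by
        intro h
        have h1 : w ∈ Gᶜ.neighborSet u := h.symm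
        have h2 : 0 < (Gᶜ.neighborSet u).ncard :=
          (Set.ncard_pos (Set.toFinite _)).2 ⟨w, h1⟩
        have h3 : (Gᶜ.neighborSet u).ncard = S5.nn G u := rfl
        omega
      set S : Set V := {u, w} with hSdef
      have hScard : S.ncard = 2 := Set.ncard_pair (Ne.symm hw)
      have hnnsw : S5.nns G S w = 0 := by
        have h := S5.nns_le_of_subset G S w ∅ (by
          rintro x ⟨hx1, hx2⟩
          simp only [hSdef, Set.mem_insert_iff, Set.mem_singleton_iff] at hx2
          rcases hx2 with rfl | rfl
          · exact absurd hx1 hwu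
          · exact absurd hx1 (Gᶜ.loopless.irrefl _))
        simpa using h
      refine ⟨S, S5.good G S 1 ?_ ?_⟩
      · intro v hv
        have hvu : v ≠ u := by
          intro e; exact hv (by simp [hSdef, e])
        have : v ∉ S5.LowS G 0 := by rw [hBeq]; simp [hvu]
        simp only [S5.LowS, Set.mem_setOf_eq] at this
        omega
      · intro v hv
        rw [hScard]
        simp only [hSdef, Set.mem_insert_iff, Set.mem_singleton_iff] at hv
        have Ku : 1 + 2 * S5.nns G S u + 1 ≤ 2 + S5.nn G u := by
          have := S5.nns_le_nn G S u
          omega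
        have Kw : 1 + 2 * S5.nns G S w + 1 ≤ 2 + S5.nn G w := by
          rw [hnnsw]
          omega
        rcases hv with rfl | rfl
        · exact Ku
        · exact Kw
  by_cases hex : ∃ j, k-1 ≤ j ∧ k+1+j ≤ (S5.LHS G k j).ncard
  · obtain ⟨j, hj1, hj2⟩ := hex
    exact S5.build G k j hk1 hj1 (by omega) hj2
  push_neg at hex
  have c1 := S5.psi_split G k (k-1) (3*k-2) hk1 (by omega)
  have c2 := S5.psi_split G k (3*k-2) (5*k-3) hk1 (by omega)
  have t1 := S5.total_split G k (k-1)
  have t2 := S5.total_split G k (3*k-2)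
  have w1 := hex (k-1) (le_refl _)
  have w2 := hex (3*k-2) (by omega)
  have bnd := S5.ncard_le_card (S5.LowS G (5*k-3))
  have hnb : Fintype.card V + (S5.LowS G (k-1)).ncard ≤ 6*k - 3 := by omega
  by_cases hk2 : k = 2
  · subst hk2
    have hn7 : 7 ≤ Fintype.card V := by omega
    have hb12 : (S5.LowS G 1).ncard = 1 ∨ (S5.LowS G 1).ncard = 2 := by
      have h1 : S5.LowS G (2-1) = S5.LowS G 1 := rfl
      rw [h1] at hb0 hb2k hnb
      omega
    have hMid : Fintype.card V ≤ (S5.MidS G 2 3).ncard + 5 := by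
      have w3 := hex 3 (by omega)
      have t3 := S5.total_split G 2 3
      omega
    rcases hb12 with h | h
    · exact S5.resid1 G hn7 h hMid
    · exact S5.resid2 G hn7 h
  · exfalso
    have hk3 : 3 ≤ k := by omega
    have hkk : 6*k + 2 ≤ 2*k^2 + 3 := by nlinarith
    have h2 : 2 ≤ 2*k^2 := by nlinarith
    set K := k^2 with hK
    omega
end

section
/- Let t ≥ 3 be a natural number and let G be a finite simple diamond-free graph that contains an induced K_{1,t}. Let S be an independent set of G such that G ⊕ S is diamond-free and K_{1,t}-free. Let r be the center of any induced K_{1,t} of G and let I be the set of vertices of N(r) that have no neighbor inside N(r). Then S ⊆ I and |S| ≥ |I| - t + 2. -/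
lemma scompl_adj {V : Type*} (G : SimpleGraph V) (S : Set V) (x y : V) :
    (scompl G S).Adj x y ↔
      x ≠ y ∧ ((x ∈ S ∧ y ∈ S ∧ ¬ G.Adj x y) ∨ (¬(x ∈ S ∧ y ∈ S) ∧ G.Adj x y)) := Iff.rfl

/-- From a big independent subset of a neighborhood, produce a star. -/
lemma indep_star {V : Type*} (H : SimpleGraph V) (t : ℕ) (r : V) (A : Set V)
    (hfin : A.Finite) (hcard : t ≤ A.ncard)
    (hadj : ∀ x ∈ A, H.Adj r x)
    (hindA : ∀ x ∈ A, ∀ y ∈ A, x ≠ y → ¬ H.Adj x y) :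
    ∃ f : Fin t → V, IsStar H t r f := by
  obtain ⟨B, hBA, hBcard⟩ := Set.exists_subset_card_eq hcard
  have hBfin : B.Finite := hfin.subset hBA
  haveI : Fintype B := hBfin.fintype
  have hcardB : Fintype.card B = t := by
    rw [← hBcard, Set.ncard_eq_toFinset_card']
    simp [Set.toFinset_card]
  let e : Fin t ≃ B := (Fintype.equivFinOfCardEq hcardB).symm
  refine ⟨fun i => (e i : V), ?_, ?_, ?_⟩
  · intro i j hij
    exact e.injective (Subtype.ext hij)
  · intro i; exact hadj _ (hBA (e i).2)
  · intro i j hij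
    exact hindA _ (hBA (e i).2) _ (hBA (e j).2)
      (fun h => hij (e.injective (Subtype.ext h)))

theorem stmt9 {V : Type*} [Fintype V] (t : ℕ) (ht : 3 ≤ t) (G : SimpleGraph V)
    (hGdf : DiamondFree G)
    (S : Set V) (hind : ∀ x ∈ S, ∀ y ∈ S, ¬ G.Adj x y)
    (hdf : DiamondFree (scompl G S)) (hsf : StarFree (scompl G S) t)
    (r : V) (f : Fin t → V) (hstar : IsStar G t r f)
    (I : Set V) (hI : I = {x : V | G.Adj r x ∧ ∀ y : V, G.Adj r y → ¬ G.Adj x y}) :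
    S ⊆ I ∧ (I.ncard : ℤ) - t + 2 ≤ (S.ncard : ℤ) := by
  obtain ⟨hinj, hadj, hnon⟩ := hstar
  -- two leaves lie in S
  have hleaf2 : ∃ a b : Fin t, a ≠ b ∧ f a ∈ S ∧ f b ∈ S := by
    by_contra h
    push_neg at h
    apply hsf r f
    refine ⟨hinj, ?_, ?_⟩
    · intro i
      exact ⟨(hadj i).ne, Or.inr ⟨fun hc => hind r hc.1 (f i) hc.2 (hadj i), hadj i⟩⟩
    · intro i j hij hA
      rcases hA.2 with ⟨h1, h2, _⟩ | ⟨_, hadj'⟩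
      · exact h i j hij h1 h2
      · exact hnon i j hij hadj'
  obtain ⟨a, b, hab, haS, hbS⟩ := hleaf2
  have hrS : r ∉ S := fun hr => hind r hr (f a) haS (hadj a)
  -- every s ∈ S is adjacent to r
  have hSr : ∀ s ∈ S, G.Adj r s := by
    intro s hs
    by_contra hrs
    have hsfa : s ≠ f a := fun h => hrs (h ▸ hadj a)
    have hsfb : s ≠ f b := fun h => hrs (h ▸ hadj b)
    apply hdf s r (f a) (f b)
    refine ⟨fun h => hrS (h ▸ hs), hsfa, hsfb, fun h => G.loopless.irrefl r (h ▸ hadj a),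
      fun h => G.loopless.irrefl r (h ▸ hadj b), fun h => hab (hinj h), ?_, ?_, ?_, ?_, ?_, ?_⟩
    · exact ⟨hsfa, Or.inl ⟨hs, haS, hind s hs (f a) haS⟩⟩
    · exact ⟨hsfb, Or.inl ⟨hs, hbS, hind s hs (f b) hbS⟩⟩
    · exact ⟨(hadj a).ne, Or.inr ⟨fun hc => hrS hc.1, hadj a⟩⟩
    · exact ⟨(hadj b).ne, Or.inr ⟨fun hc => hrS hc.1, hadj b⟩⟩
    · exact ⟨fun h => hab (hinj h), Or.inl ⟨haS, hbS, hnon a b hab⟩⟩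
    · rintro ⟨hne, ⟨_, hrS', _⟩ | ⟨_, hadj'⟩⟩
      · exact hrS hrS'
      · exact hrs hadj'.symm
  -- every s ∈ S has no neighbor in N(r)
  have hSI : ∀ s ∈ S, ∀ y : V, G.Adj r y → ¬ G.Adj s y := by
    intro s hs y hry hsy
    have hyS : y ∉ S := fun hy => hind s hs y hy hsy
    have hrs : G.Adj r s := hSr s hs
    -- get g ∈ S with G.Adj r g and g ≠ s
    obtain ⟨g, hgS, hrg, hgs⟩ : ∃ g, g ∈ S ∧ G.Adj r g ∧ g ≠ s := by
      by_cases h : s = f a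
      · exact ⟨f b, hbS, hadj b, fun hh => hab (hinj (hh.trans h)).symm⟩
      · exact ⟨f a, haS, hadj a, fun hh => h hh.symm⟩
    have hgsadj : ¬ G.Adj g s := hind g hgS s hs
    have hgy : ¬ G.Adj g y := by
      intro hgy
      apply hGdf g s y r
      exact ⟨hgs, fun h => G.loopless.irrefl y (h ▸ hgy), hrg.ne', hsy.ne, hrs.ne', hry.ne',
        hgy, hrg.symm, hsy, hrs.symm, hry.symm, hgsadj⟩
    apply hdf y g r s
    refine ⟨?_, hry.ne', hsy.ne', hrg.ne', hgs, hrs.ne, ?_, ?_, ?_, ?_, ?_, ?_⟩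
    · intro h; exact hgsadj (by rw [← h]; exact hsy.symm)
    · exact ⟨hry.ne', Or.inr ⟨fun hc => hyS hc.1, hry.symm⟩⟩
    · exact ⟨hsy.ne', Or.inr ⟨fun hc => hyS hc.1, hsy.symm⟩⟩
    · exact ⟨hrg.ne', Or.inr ⟨fun hc => hrS hc.2, hrg.symm⟩⟩
    · exact ⟨hgs, Or.inl ⟨hgS, hs, hgsadj⟩⟩
    · exact ⟨hrs.ne, Or.inr ⟨fun hc => hrS hc.1, hrs⟩⟩
    · rintro ⟨hne, ⟨hy', _, _⟩ | ⟨_, hadj'⟩⟩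
      · exact hyS hy'
      · exact hgy hadj'.symm
  have hSsubI : S ⊆ I := by
    intro s hs
    rw [hI]
    exact ⟨hSr s hs, hSI s hs⟩
  refine ⟨hSsubI, ?_⟩
  -- the cardinality bound
  set J : Set V := I \ S with hJ
  have hfinI : I.Finite := Set.toFinite I
  have hIprop : ∀ x ∈ I, G.Adj r x ∧ ∀ y : V, G.Adj r y → ¬ G.Adj x y := by
    intro x hx; rw [hI] at hx; exact hx
  -- J ∪ {f a} is independent in scompl and in the neighborhood of r
  have hJcard : J.ncard + 2 ≤ t := by
    by_contra hc
    push_neg at hc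
    set A : Set V := insert (f a) J with hA
    have hfaJ : f a ∉ J := fun h => h.2 haS
    have hcardA : t ≤ A.ncard := by
      rw [hA, Set.ncard_insert_of_notMem hfaJ hfinI.diff]
      omega
    have hadjA : ∀ x ∈ A, (scompl G S).Adj r x := by
      rintro x (rfl | hxJ)
      · exact ⟨(hadj a).ne, Or.inr ⟨fun hc => hrS hc.1, hadj a⟩⟩
      · have hx := hIprop x hxJ.1
        exact ⟨hx.1.ne, Or.inr ⟨fun hc => hxJ.2 hc.2, hx.1⟩⟩
    have hAI : ∀ x ∈ A, x ∈ I := by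
      rintro x (rfl | hxJ)
      · exact hSsubI haS
      · exact hxJ.1
    have hindA : ∀ x ∈ A, ∀ y ∈ A, x ≠ y → ¬ (scompl G S).Adj x y := by
      intro x hx y hy hxy hAdj
      rcases hAdj.2 with ⟨hxS, hyS', _⟩ | ⟨_, hadj'⟩
      · have hx' : x = f a := by
          rcases hx with rfl | hxJ
          · rfl
          · exact absurd hxS hxJ.2
        have hy' : y = f a := by
          rcases hy with rfl | hyJ
          · rfl
          · exact absurd hyS' hyJ.2
        exact hxy (hx'.trans hy'.symm)
      · exact (hIprop x (hAI x hx)).2 y (hIprop y (hAI y hy)).1 hadj'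
    obtain ⟨g', hg'⟩ := indep_star (scompl G S) t r A (hfinI.diff.insert _) hcardA hadjA hindA
    exact hsf r g' hg'
  have hsum : J.ncard + S.ncard = I.ncard :=
    Set.ncard_diff_add_ncard_of_subset hSsubI hfinI
  omega
end

section
/- Let t ≥ 1 be a natural number, let G be a finite simple graph, and let S be an independent set of G such that G ⊕ S is K_{1,t}-free. If r is the center of an induced K_{1,t} of G, then r ∉ S. -/
theorem stmt10 {V : Type*} [Fintype V] (t : ℕ) (ht : 1 ≤ t) (G : SimpleGraph V)
    (S : Set V) (hind : ∀ x ∈ S, ∀ y ∈ S, ¬ G.Adj x y)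
    (hsf : StarFree (scompl G S) t)
    (r : V) (f : Fin t → V) (hstar : IsStar G t r f) :
    r ∉ S := by
  intro hrS
  obtain ⟨hinj, hadj, hnadj⟩ := hstar
  have hfS : ∀ i, f i ∉ S := fun i hfi => hind r hrS (f i) hfi (hadj i)
  exact hsf r f ⟨hinj, fun i => ⟨(hadj i).ne, Or.inr ⟨fun h => hfS i h.2, hadj i⟩⟩,
    fun i j hij h => hnadj i j hij (h.2.elim (fun h' => absurd h'.1 (hfS i)) And.right)⟩
end

section
/- Let t ≥ 3 be a natural number, let G be a finite simple graph, let S be a set of vertices of G, and let u, v ∈ S be two distinct vertices adjacent in G. Suppose G ⊕ S is diamond-free and K_{1,t}-free. Then the set S ∩ (N(u) \ N[v]) contains no t vertices that are pairwise adjacent in G, and the set (N(u) \ N[v]) \ S contains no t vertices that are pairwise nonadjacent in G. (That is, N(u) \ N[v] induces a (t-1, t-1)-split graph with split partition (S ∩ (N(u) \ N[v]), (N(u) \ N[v]) \ S).) -/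
theorem stmt12 {V : Type*} [Fintype V] (t : ℕ) (ht : 3 ≤ t) (G : SimpleGraph V)
    (S : Set V) (u v : V) (hu : u ∈ S) (hv : v ∈ S) (huv : G.Adj u v)
    (hdf : DiamondFree (scompl G S)) (hsf : StarFree (scompl G S) t) :
    (¬ ∃ T : Finset V, T.card = t ∧
        (∀ x ∈ T, x ∈ S ∧ G.Adj u x ∧ x ≠ v ∧ ¬ G.Adj v x) ∧
        (∀ x ∈ T, ∀ y ∈ T, x ≠ y → G.Adj x y)) ∧
    (¬ ∃ T : Finset V, T.card = t ∧
        (∀ x ∈ T, x ∉ S ∧ G.Adj u x ∧ x ≠ v ∧ ¬ G.Adj v x) ∧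
        (∀ x ∈ T, ∀ y ∈ T, x ≠ y → ¬ G.Adj x y)) := by
  constructor
  · rintro ⟨T, hcard, hmem, hclq⟩
    have e := T.equivFinOfCardEq hcard
    set f : Fin t → V := fun i => (e.symm i : V) with hf
    have hmemf : ∀ i, f i ∈ T := fun i => (e.symm i).2
    have hinj : Function.Injective f :=
      fun i j h => e.symm.injective (Subtype.ext h)
    exact hsf v f ⟨hinj, fun i => by
      obtain ⟨hS, _, hne, hnadj⟩ := hmem _ (hmemf i)
      exact ⟨fun h => hne h.symm, Or.inl ⟨hv, hS, hnadj⟩⟩,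
      fun i j hij h => by
      obtain ⟨hSi, _, _, _⟩ := hmem _ (hmemf i)
      obtain ⟨hSj, _, _, _⟩ := hmem _ (hmemf j)
      have hne : f i ≠ f j := fun h' => hij (hinj h')
      rcases h.2 with ⟨_, _, hn⟩ | ⟨hn, _⟩
      · exact hn (hclq _ (hmemf i) _ (hmemf j) hne)
      · exact hn ⟨hSi, hSj⟩⟩
  · rintro ⟨T, hcard, hmem, hind⟩
    have e := T.equivFinOfCardEq hcard
    set f : Fin t → V := fun i => (e.symm i : V) with hf
    have hmemf : ∀ i, f i ∈ T := fun i => (e.symm i).2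
    have hinj : Function.Injective f :=
      fun i j h => e.symm.injective (Subtype.ext h)
    exact hsf u f ⟨hinj, fun i => by
      obtain ⟨hS, hadj, _, _⟩ := hmem _ (hmemf i)
      exact ⟨fun h => hS (h ▸ hu), Or.inr ⟨fun hc => hS hc.2, hadj⟩⟩,
      fun i j hij h => by
      obtain ⟨hSi, _, _, _⟩ := hmem _ (hmemf i)
      have hne : f i ≠ f j := fun h' => hij (hinj h')
      rcases h.2 with ⟨hi, _, _⟩ | ⟨_, hadj⟩
      · exact hSi hi
      · exact hind _ (hmemf i) _ (hmemf j) hne hadj⟩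
end

section
/- Let t ≥ 3 be a natural number, let G be a finite simple graph, let S be a set of vertices of G, and let u, v ∈ S be two distinct vertices adjacent in G. Suppose G ⊕ S is diamond-free and K_{1,t}-free. Then the set (N(u) ∩ N(v)) \ S is an independent set of G and has at most t - 1 vertices. -/
theorem stmt13 {V : Type*} [Fintype V] (t : ℕ) (ht : 3 ≤ t) (G : SimpleGraph V)
    (S : Set V) (u v : V) (hu : u ∈ S) (hv : v ∈ S) (huv : G.Adj u v)
    (hdf : DiamondFree (scompl G S)) (hsf : StarFree (scompl G S) t)
    (A : Set V) (hA : A = {x : V | G.Adj u x ∧ G.Adj v x ∧ x ∉ S}) :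
    (∀ x ∈ A, ∀ y ∈ A, ¬ G.Adj x y) ∧ A.ncard ≤ t - 1 := by
  subst hA
  have hux : ∀ x ∈ ({x : V | G.Adj u x ∧ G.Adj v x ∧ x ∉ S} : Set V),
      (scompl G S).Adj u x := by
    rintro x ⟨h1, h2, h3⟩
    exact ⟨G.ne_of_adj h1, Or.inr ⟨fun hc => h3 hc.2, h1⟩⟩
  have hvx : ∀ x ∈ ({x : V | G.Adj u x ∧ G.Adj v x ∧ x ∉ S} : Set V),
      (scompl G S).Adj v x := by
    rintro x ⟨h1, h2, h3⟩
    exact ⟨G.ne_of_adj h2, Or.inr ⟨fun hc => h3 hc.2, h2⟩⟩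
  have hnuv : ¬ (scompl G S).Adj u v := by
    rintro ⟨-, ⟨-, -, h⟩ | ⟨h, -⟩⟩
    · exact h huv
    · exact h ⟨hu, hv⟩
  have hindep : ∀ x ∈ ({x : V | G.Adj u x ∧ G.Adj v x ∧ x ∉ S} : Set V),
      ∀ y ∈ ({x : V | G.Adj u x ∧ G.Adj v x ∧ x ∉ S} : Set V), ¬ G.Adj x y := by
    intro x hx y hy hxy
    obtain ⟨hx1, hx2, hx3⟩ := hx
    obtain ⟨hy1, hy2, hy3⟩ := hy
    exact hdf u v x y ⟨G.ne_of_adj huv, G.ne_of_adj hx1, G.ne_of_adj hy1,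
      G.ne_of_adj hx2, G.ne_of_adj hy2, G.ne_of_adj hxy,
      hux x ⟨hx1, hx2, hx3⟩, hux y ⟨hy1, hy2, hy3⟩, hvx x ⟨hx1, hx2, hx3⟩,
      hvx y ⟨hy1, hy2, hy3⟩, ⟨G.ne_of_adj hxy, Or.inr ⟨fun hc => hx3 hc.1, hxy⟩⟩, hnuv⟩
  refine ⟨hindep, ?_⟩
  by_contra hcard
  push_neg at hcard
  have hfin : ({x : V | G.Adj u x ∧ G.Adj v x ∧ x ∉ S} : Set V).Finite := Set.toFinite _
  have ht' : t ≤ ({x : V | G.Adj u x ∧ G.Adj v x ∧ x ∉ S} : Set V).ncard := by omega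
  obtain ⟨B, hBsub, hBcard⟩ := Set.exists_subset_card_eq ht'
  have hBfin : B.Finite := hfin.subset hBsub
  haveI : Fintype B := hBfin.fintype
  have hcardB : Fintype.card B = t := by
    rw [← Nat.card_eq_fintype_card, Nat.card_coe_set_eq, hBcard]
  obtain ⟨e⟩ := Fintype.card_eq.mp (hcardB.trans (Fintype.card_fin t).symm)
  set f : Fin t → V := fun i => (e.symm i : V) with hf
  have hfA : ∀ i, f i ∈ ({x : V | G.Adj u x ∧ G.Adj v x ∧ x ∉ S} : Set V) :=
    fun i => hBsub (e.symm i).2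
  have hfinj : Function.Injective f :=
    Subtype.val_injective.comp e.symm.injective
  exact hsf u f ⟨hfinj, fun i => hux _ (hfA i), by
    intro i j hij hadj
    rcases hadj with ⟨hne, ⟨hS, -, -⟩ | ⟨-, hadj'⟩⟩
    · exact (hfA i).2.2 hS
    · exact hindep _ (hfA i) _ (hfA j) hadj'⟩
end

section
/- Let G be a finite simple graph, let S be a set of vertices of G, and let u, v ∈ S be two distinct vertices adjacent in G. Suppose G ⊕ S is diamond-free. Then the set S ∩ (V \ (N[u] ∪ N[v])) of vertices of S adjacent to neither u nor v is a clique of G (pairwise adjacent vertices). -/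
theorem stmt14 {V : Type*} [Fintype V] (G : SimpleGraph V)
    (S : Set V) (u v : V) (hu : u ∈ S) (hv : v ∈ S) (huv : G.Adj u v)
    (hdf : DiamondFree (scompl G S))
    (A : Set V) (hA : A = {x : V | x ∈ S ∧ x ≠ u ∧ x ≠ v ∧ ¬ G.Adj u x ∧ ¬ G.Adj v x}) :
    ∀ x ∈ A, ∀ y ∈ A, x ≠ y → G.Adj x y := by
  intro x hx y hy hxy
  by_contra hnadj
  subst hA
  obtain ⟨hxS, hxu, hxv, hux, hvx⟩ := hx
  obtain ⟨hyS, hyu, hyv, huy, hvy⟩ := hy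
  exact hdf u v x y ⟨huv.ne, Ne.symm hxu, Ne.symm hyu, Ne.symm hxv, Ne.symm hyv, hxy,
    ⟨Ne.symm hxu, Or.inl ⟨hu, hxS, hux⟩⟩,
    ⟨Ne.symm hyu, Or.inl ⟨hu, hyS, huy⟩⟩,
    ⟨Ne.symm hxv, Or.inl ⟨hv, hxS, hvx⟩⟩,
    ⟨Ne.symm hyv, Or.inl ⟨hv, hyS, hvy⟩⟩,
    ⟨hxy, Or.inl ⟨hxS, hyS, hnadj⟩⟩,
    fun h => (h.2.resolve_right (fun h' => h'.1 ⟨hu, hv⟩)).2.2 huv⟩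
end
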